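/- arXiv:2206.08060 — 5 statements merged into one kernel-verified Lean document; each statement's English description precedes it below -/
import Mathlib

section
/- Let K/L be a field extension, and let f = a_{n_0} t^{n_0} + a_{n_1} t^{n_1} + ... be an element of the Laurent series field K((t)) that is algebraic over the subfield L((t)). Then every coefficient a_{n_i} of f is algebraic over L. -/
/-- The ring homomorphism between Laurent series fields induced by applying a ring
homomorphism to each coefficient. -/
noncomputable def LaurentSeries.mapRingHom {R S : Type*} [CommRing R] [CommRing S]
    (f : R →+* S) : LaurentSeries R →+* LaurentSeries S where
  toFun x := x.map f
  map_one' := HahnSeries.map_one f.toMonoidWithZeroHom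
  map_mul' x y := HahnSeries.map_mul (f : R →ₙ+* S)
  map_zero' := by ext; simp
  map_add' x y := HahnSeries.map_add (f : R →+ S)

lemma LaurentSeries.mapRingHom_apply_coeff {R S : Type*} [CommRing R] [CommRing S]
    (f : R →+* S) (x : LaurentSeries R) (d : ℤ) :
    (LaurentSeries.mapRingHom f x).coeff d = f (x.coeff d) := rfl

lemma LaurentSeries.mapRingHom_comp {R S T : Type*} [CommRing R] [CommRing S] [CommRing T]
    (g : S →+* T) (f : R →+* S) :
    (LaurentSeries.mapRingHom g).comp (LaurentSeries.mapRingHom f) =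
      LaurentSeries.mapRingHom (g.comp f) := rfl

/-- Let `K/L` be a field extension and let `f ∈ K((t))` be algebraic over
the subfield `L((t))` (i.e. there is a nonzero polynomial with coefficients in `L((t))`
vanishing at `f`).  Then every coefficient of `f` is algebraic over `L`. -/
theorem coeff_isAlgebraic_of_laurentSeries_isAlgebraic
    {L K : Type*} [Field L] [Field K] [Algebra L K] (f : LaurentSeries K)
    (hf : ∃ p : Polynomial (LaurentSeries L), p ≠ 0 ∧
      Polynomial.eval₂ (LaurentSeries.mapRingHom (algebraMap L K)) f p = 0) :
    ∀ n : ℤ, IsAlgebraic L (f.coeff n) := by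
  classical
  intro n
  by_contra ha
  obtain ⟨p, hp0, hpf⟩ := hf
  set a : K := f.coeff n with ha_def
  have hta : Transcendental L a := ha
  -- a transcendence basis of `K` over `L` containing `a`
  have hsingle : AlgebraicIndependent L ((↑) : ({a} : Set K) → K) := by
    haveI : Unique ({a} : Set K) := Set.uniqueSingleton a
    rw [algebraicIndependent_unique_type_iff,
      show ((default : ({a} : Set K)) : K) = a from (default : ({a} : Set K)).2]
    exact hta
  obtain ⟨u, hau, hmax⟩ := exists_maximal_algebraicIndependent ({a} : Set K) Set.univ
    (Set.subset_univ _) hsingle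
  have hamem : a ∈ u := hau rfl
  have hu : IsTranscendenceBasis L ((↑) : u → K) := by
    refine ⟨hmax.1.1, fun t ht hut => ?_⟩
    simp only [Subtype.range_coe_subtype, Set.setOf_mem_eq] at *
    exact hmax.eq_of_le ⟨ht, Set.subset_univ _⟩ hut
  set Ω := AlgebraicClosure K
  haveI : Algebra.IsAlgebraic (IntermediateField.adjoin L (Set.range ((↑) : u → K))) K :=
    hu.isAlgebraic_field
  -- for each `i`, an `L`-algebra embedding of `K` into `Ω` sending `a` to `(a : Ω) ^ (i+1)`
  have key : ∀ i : ℕ, ∃ σ : K →ₐ[L] Ω, σ a = (algebraMap K Ω a) ^ (i + 1) := by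
    intro i
    set w : u → K := fun j => if (j : K) = a then (j : K) ^ (i + 1) else (j : K) with hw_def
    have hw : AlgebraicIndependent L w := by
      have h1 : ∀ j : u, Transcendental L
          (if (j : K) = a then (Polynomial.X : Polynomial L) ^ (i + 1) else Polynomial.X) := by
        intro j
        split
        · exact (Polynomial.transcendental_X L).pow (by omega)
        · exact Polynomial.transcendental_X L
      have h2 := hu.1.polynomial_aeval_of_transcendental h1
      simpa [apply_ite, map_pow] using h2
    let ψ₀ : FractionRing (MvPolynomial u L) →ₐ[L] K :=
      IsFractionRing.liftAlgHom (algebraicIndependent_iff_injective_aeval.1 hw)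
    let ψ : IntermediateField.adjoin L (Set.range ((↑) : u → K)) →ₐ[L] Ω :=
      (IsScalarTower.toAlgHom L K Ω).comp (ψ₀.comp hu.1.reprField)
    obtain ⟨σ, hσ⟩ := IsAlgClosed.surjective_restrictDomain_of_isAlgebraic
      (K := L) (L := IntermediateField.adjoin L (Set.range ((↑) : u → K))) (E := K) (M := Ω) ψ
    refine ⟨σ, ?_⟩
    have hamem' : a ∈ IntermediateField.adjoin L (Set.range ((↑) : u → K)) :=
      IntermediateField.subset_adjoin _ _ ⟨⟨a, hamem⟩, rfl⟩
    have h1 : σ a = ψ ⟨a, hamem'⟩ := by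
      have h := congrArg (fun φ => φ (⟨a, hamem'⟩ :
        IntermediateField.adjoin L (Set.range ((↑) : u → K)))) hσ
      simpa [AlgHom.restrictDomain, AlgHom.domRestrict] using h
    have hrepr : hu.1.reprField ⟨a, hamem'⟩ =
        algebraMap (MvPolynomial u L) (FractionRing (MvPolynomial u L))
          (MvPolynomial.X ⟨a, hamem⟩) := by
      have : (⟨a, hamem'⟩ : IntermediateField.adjoin L (Set.range ((↑) : u → K))) =
          hu.1.aevalEquivField (algebraMap (MvPolynomial u L) (FractionRing (MvPolynomial u L))
            (MvPolynomial.X ⟨a, hamem⟩)) := by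
        apply Subtype.ext
        rw [hu.1.aevalEquivField_algebraMap_apply_coe]
        simp
      rw [this]
      simp [AlgebraicIndependent.reprField]
    have h2 : ψ ⟨a, hamem'⟩ = algebraMap K Ω (w ⟨a, hamem⟩) := by
      simp only [ψ, ψ₀, AlgHom.comp_apply, hrepr, IsFractionRing.liftAlgHom_apply]
      rw [IsFractionRing.lift_algebraMap]
      simp
    rw [h1, h2]
    simp [w, map_pow]
  choose σ hσ using key
  -- the image polynomial over `Ω((t))`
  set q : Polynomial (LaurentSeries Ω) := p.map (LaurentSeries.mapRingHom (algebraMap L Ω))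
    with hq_def
  have hq0 : q ≠ 0 := (Polynomial.map_ne_zero_iff (RingHom.injective _)).2 hp0
  have hroot : ∀ i, q.IsRoot ((LaurentSeries.mapRingHom (σ i).toRingHom) f) := by
    intro i
    have h2 : (σ i).toRingHom.comp (algebraMap L K) = algebraMap L Ω := by
      ext l; simp
    have h := congrArg (LaurentSeries.mapRingHom (σ i).toRingHom) hpf
    rw [Polynomial.hom_eval₂, map_zero, LaurentSeries.mapRingHom_comp, h2] at h
    rwa [Polynomial.IsRoot, Polynomial.eval_map]
  have hc : Transcendental L (algebraMap K Ω a) :=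
    (transcendental_algebraMap_iff (algebraMap K Ω).injective).2 hta
  have hc0 : (algebraMap K Ω a) ≠ 0 := by
    intro h
    exact hc (h ▸ isAlgebraic_zero)
  have hinj : Function.Injective (fun i => (LaurentSeries.mapRingHom (σ i).toRingHom) f) := by
    intro i j hij
    have h := congrArg (fun y : LaurentSeries Ω => y.coeff n) hij
    simp only [LaurentSeries.mapRingHom_apply_coeff] at h
    rw [← ha_def] at h
    have hpow : (algebraMap K Ω a) ^ (i + 1) = (algebraMap K Ω a) ^ (j + 1) := by
      rw [← hσ i, ← hσ j]; exact h
    by_contra hne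
    -- wlog i < j
    rcases Nat.lt_or_ge i j with hlt | hge
    · have h3 : (algebraMap K Ω a) ^ (j - i) = 1 := by
        have := hpow.symm
        rw [show j + 1 = (j - i) + (i + 1) by omega, pow_add] at this
        exact mul_right_cancel₀ (pow_ne_zero _ hc0) (by rw [one_mul]; exact this)
      have hd : 0 < j - i := by omega
      exact hc ⟨Polynomial.X ^ (j - i) - Polynomial.C 1,
        Polynomial.X_pow_sub_C_ne_zero hd 1, by simp [sub_eq_zero, h3]⟩
    · have hlt : j < i := by omega
      have h3 : (algebraMap K Ω a) ^ (i - j) = 1 := by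
        have := hpow
        rw [show i + 1 = (i - j) + (j + 1) by omega, pow_add] at this
        exact mul_right_cancel₀ (pow_ne_zero _ hc0) (by rw [one_mul]; exact this)
      have hd : 0 < i - j := by omega
      exact hc ⟨Polynomial.X ^ (i - j) - Polynomial.C 1,
        Polynomial.X_pow_sub_C_ne_zero hd 1, by simp [sub_eq_zero, h3]⟩
  exact (Polynomial.finite_setOf_isRoot hq0).not_infinite
    (Set.infinite_of_injective_forall_mem hinj (fun i => hroot i))
end

section
/- Let L be a field and ξ an element of an extension field of L that is algebraic over L. Then the Laurent series field L(ξ)((t)) equals L((t))(ξ), and in particular L(ξ)((t)) is a finite extension of L((t)) of degree equal to [L(ξ) : L]. -/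
set_option synthInstance.maxHeartbeats 800000
set_option maxHeartbeats 1000000

/-- `K((t))` is an algebra over `L((t))`, coefficientwise. -/
noncomputable instance laurentSeriesAlgebra {L K : Type*} [Field L] [Field K] [Algebra L K] :
    Algebra (LaurentSeries L) (LaurentSeries K) :=
  (LaurentSeries.mapRingHom (algebraMap L K)).toAlgebra

section aux
variable {L E : Type*} [Field L] [Field E] [Algebra L E]

@[simp] lemma mapRingHom_coeff {R S : Type*} [CommRing R] [CommRing S] (f : R →+* S)
    (x : LaurentSeries R) (n : ℤ) : (LaurentSeries.mapRingHom f x).coeff n = f (x.coeff n) := rfl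

lemma ls_algebraMap_eq : algebraMap (LaurentSeries L) (LaurentSeries E)
    = LaurentSeries.mapRingHom (algebraMap L E) := rfl

lemma ls_smul_def (c : LaurentSeries L) (x : LaurentSeries E) :
    c • x = LaurentSeries.mapRingHom (algebraMap L E) c * x := rfl

variable {ι : Type*} [Fintype ι] (b : Module.Basis ι L E)

lemma ls_coeff_sum {R : Type*} [CommRing R] {α : Type*} (s : Finset α)
    (f : α → LaurentSeries R) (n : ℤ) :
    (∑ i ∈ s, f i).coeff n = ∑ i ∈ s, (f i).coeff n :=
  map_sum (HahnSeries.coeff.addMonoidHom n) f s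

lemma ls_repr_eq (x : LaurentSeries E) :
    x = ∑ i, (x.map (b.coord i : E →ₗ[L] L)) • (HahnSeries.C (b i) : LaurentSeries E) := by
  ext n
  rw [ls_coeff_sum]
  have : ∀ i : ι, ((x.map (b.coord i : E →ₗ[L] L)) •
      (HahnSeries.C (b i) : LaurentSeries E)).coeff n
      = (b.repr (x.coeff n) i) • b i := by
    intro i
    rw [ls_smul_def, HahnSeries.C_apply, HahnSeries.coeff_mul_single_zero]
    simp [Algebra.smul_def]
  simp only [this]
  exact (b.sum_repr (x.coeff n)).symm

lemma ls_linearIndependent :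
    LinearIndependent (LaurentSeries L) (fun i => (HahnSeries.C (b i) : LaurentSeries E)) := by
  rw [Fintype.linearIndependent_iff]
  intro c hc i
  ext n
  have h := congrArg (fun x : LaurentSeries E => x.coeff n) hc
  rw [ls_coeff_sum] at h
  have h2 : ∀ j : ι, ((c j) • (HahnSeries.C (b j) : LaurentSeries E)).coeff n
      = ((c j).coeff n) • b j := by
    intro j
    rw [ls_smul_def, HahnSeries.C_apply, HahnSeries.coeff_mul_single_zero]
    simp [Algebra.smul_def]
  simp only [h2] at h
  have := Fintype.linearIndependent_iff.mp b.linearIndependent (fun j => (c j).coeff n) h i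
  simpa using this

noncomputable def lsBasis : Module.Basis ι (LaurentSeries L) (LaurentSeries E) :=
  Module.Basis.mk (ls_linearIndependent b) (by
    intro x _
    rw [ls_repr_eq b x]
    exact Submodule.sum_mem _ fun i _ => Submodule.smul_mem _ _
      (Submodule.subset_span (Set.mem_range_self i)))

end aux

/-- Let `ξ` be an element of an extension field `K` of `L` that is algebraic
over `L`.  Viewing everything inside `K((t))`, the Laurent series field `L(ξ)((t))`
(the Laurent series all of whose coefficients lie in `L(ξ)`) equals `L((t))(ξ)`,
and `L(ξ)((t))` is a finite extension of `L((t))` of degree `[L(ξ) : L]`. -/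
theorem laurentSeries_adjoin_algebraic
    {L K : Type*} [Field L] [Field K] [Algebra L K] (ξ : K) (hξ : IsAlgebraic L ξ) :
    ({f : LaurentSeries K | ∀ n : ℤ, f.coeff n ∈ IntermediateField.adjoin L {ξ}}
        = (IntermediateField.adjoin (LaurentSeries L)
            {((HahnSeries.C ξ : LaurentSeries K))} : Set (LaurentSeries K)))
    ∧ FiniteDimensional (LaurentSeries L) (LaurentSeries (IntermediateField.adjoin L {ξ}))
    ∧ Module.finrank (LaurentSeries L) (LaurentSeries (IntermediateField.adjoin L {ξ}))
      = Module.finrank L (IntermediateField.adjoin L {ξ}) := by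
  set F := IntermediateField.adjoin L {ξ} with hF
  haveI : FiniteDimensional L F := IntermediateField.adjoin.finiteDimensional hξ.isIntegral
  set b : Module.Basis (Fin (Module.finrank L F)) L F := Module.finBasis L F with hb
  set emb : LaurentSeries F →+* LaurentSeries K :=
    LaurentSeries.mapRingHom (algebraMap F K) with hemb
  -- emb is L((t))-linear
  have emb_smul : ∀ (c : LaurentSeries L) (x : LaurentSeries F),
      emb (c • x) = c • emb x := by
    intro c x
    rw [ls_smul_def, map_mul, ls_smul_def]
    congr 1
  -- range of emb
  have hrange : ∀ f : LaurentSeries K, (∀ n : ℤ, f.coeff n ∈ F) → f ∈ Set.range emb := by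
    intro f h
    refine ⟨{ coeff := fun n => (⟨f.coeff n, h n⟩ : F),
              isPWO_support' := f.isPWO_support.mono fun n hn => ?_ }, ?_⟩
    · simp only [Function.mem_support, ne_eq, Subtype.ext_iff] at hn ⊢
      simpa using hn
    · ext n; rfl
  have hrange' : ∀ g : LaurentSeries F, ∀ n : ℤ, (emb g).coeff n ∈ F := by
    intro g n
    exact SetLike.coe_mem (g.coeff n)
  -- the set of series with coefficients in F, as an intermediate field
  set S' : IntermediateField (LaurentSeries L) (LaurentSeries K) :=
    { carrier := {f : LaurentSeries K | ∀ n : ℤ, f.coeff n ∈ F}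
      mul_mem' := by
        intro a c ha hc n
        rw [HahnSeries.coeff_mul]
        exact sum_mem fun ij _ => mul_mem (ha _) (hc _)
      one_mem' := by
        intro n
        rw [HahnSeries.coeff_one]
        split
        exacts [one_mem F, zero_mem F]
      add_mem' := by
        intro a c ha hc n
        rw [HahnSeries.coeff_add]
        exact add_mem (ha n) (hc n)
      zero_mem' := by intro n; exact zero_mem F
      algebraMap_mem' := by
        intro c n
        rw [ls_algebraMap_eq]
        exact F.algebraMap_mem (c.coeff n)
      inv_mem' := by
        intro f hf n
        obtain ⟨g, rfl⟩ := hrange f hf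
        rw [← map_inv₀ emb]
        exact hrange' _ n } with hS'
  set A := IntermediateField.adjoin (LaurentSeries L) {(HahnSeries.C ξ : LaurentSeries K)}
    with hA
  -- C of elements of F lie in A
  have hC : ∀ x : K, x ∈ F → (HahnSeries.C x : LaurentSeries K) ∈ A := by
    intro x hx
    induction hx using IntermediateField.adjoin_induction with
    | mem y hy =>
      rcases hy with rfl
      exact IntermediateField.subset_adjoin _ _ rfl
    | algebraMap r =>
      have : (HahnSeries.C (algebraMap L K r) : LaurentSeries K)
          = algebraMap (LaurentSeries L) (LaurentSeries K) (HahnSeries.C r) := by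
        rw [ls_algebraMap_eq]
        exact (HahnSeries.map_C r (algebraMap L K)).symm
      rw [this]
      exact A.algebraMap_mem _
    | add y z _ _ hy hz => rw [map_add]; exact add_mem hy hz
    | inv y _ hy => rw [map_inv₀]; exact inv_mem hy
    | mul y z _ _ hy hz => rw [map_mul]; exact mul_mem hy hz
  constructor
  · apply Set.Subset.antisymm
    · intro f hf
      obtain ⟨g, rfl⟩ := hrange f hf
      rw [ls_repr_eq b g, map_sum]
      refine sum_mem fun i _ => ?_
      rw [emb_smul, Algebra.smul_def]
      refine mul_mem (A.algebraMap_mem _) ?_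
      have : emb (HahnSeries.C (b i)) = HahnSeries.C ((b i : K)) :=
        HahnSeries.map_C (b i) (algebraMap F K)
      rw [this]
      exact hC _ (SetLike.coe_mem (b i))
    · have : A ≤ S' := IntermediateField.adjoin_le_iff.mpr (by
        intro x hx
        rcases hx with rfl
        intro n
        rw [HahnSeries.C_apply, HahnSeries.coeff_single]
        split
        · exact IntermediateField.mem_adjoin_simple_self L ξ
        · exact zero_mem F)
      exact this
  · constructor
    · exact Module.Finite.of_basis (lsBasis b)
    · rw [Module.finrank_eq_card_basis (lsBasis b), Fintype.card_fin]
end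

section
/- Let f : X → Y be a continuous map of topological spaces with finite fibers, and let x_0, x_1, ..., x_d be distinct points of X such that x_i lies in the closure of {x_{i-1}} for all i, and each x_i is isolated in its fiber f^{-1}(f(x_i)). Then the points f(x_0), ..., f(x_d) are pairwise distinct, and f(x_i) lies in the closure of {f(x_{i-1})} for all i. -/
/-- Let `f : X → Y` be a continuous map of topological spaces with finite
fibers, and let `x_0, …, x_d` be distinct points of `X` such that `x_i` lies in the closure
of `{x_{i-1}}` and each `x_i` is isolated in its fiber.  Then the images `f(x_0), …, f(x_d)`
are pairwise distinct and `f(x_i)` lies in the closure of `{f(x_{i-1})}`. -/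
theorem images_distinct_of_specialization_chain
    {X Y : Type*} [TopologicalSpace X] [TopologicalSpace Y] (f : X → Y)
    (hf : Continuous f) (hfin : ∀ y : Y, (f ⁻¹' {y}).Finite)
    (d : ℕ) (x : Fin (d + 1) → X) (hx : Function.Injective x)
    (hspec : ∀ i : Fin d, x i.succ ∈ closure {x i.castSucc})
    (hiso : ∀ i, ∃ U : Set X, IsOpen U ∧ U ∩ f ⁻¹' {f (x i)} = {x i}) :
    Function.Injective (f ∘ x) ∧
      ∀ i : Fin d, f (x i.succ) ∈ closure {f (x i.castSucc)} := by
  have key : ∀ k : ℕ, ∀ i j : Fin (d + 1), (j : ℕ) = i + k → x i ⤳ x j := by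
    intro k
    induction k with
    | zero =>
      intro i j h
      have : i = j := Fin.ext (by omega)
      subst this; exact specializes_refl _
    | succ k ih =>
      intro i j h
      have hjd : (j : ℕ) - 1 < d := by omega
      set m : Fin d := ⟨(j : ℕ) - 1, hjd⟩ with hm
      have h1 : x m.castSucc ⤳ x m.succ := specializes_iff_mem_closure.mpr (hspec m)
      have hs : m.succ = j := Fin.ext (by simp [Fin.val_succ, hm]; omega)
      have h0 : x i ⤳ x m.castSucc := ih i m.castSucc (by simp [Fin.coe_castSucc, hm]; omega)
      exact h0.trans (hs ▸ h1)
  have hlt : ∀ i j : Fin (d + 1), i < j → x i ⤳ x j := fun i j hij =>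
    key ((j : ℕ) - i) i j (by omega)
  have hne : ∀ i j : Fin (d + 1), i < j → f (x i) ≠ f (x j) := by
    intro i j hij hfe
    obtain ⟨U, hU, hUI⟩ := hiso j
    have hxjU : x j ∈ U := by
      have : x j ∈ ({x j} : Set X) := rfl
      rw [← hUI] at this
      exact this.1
    have hxiU : x i ∈ U := (hlt i j hij).mem_open hU hxjU
    have : x i ∈ U ∩ f ⁻¹' {f (x j)} := ⟨hxiU, by simp [hfe]⟩
    rw [hUI] at this
    exact absurd (hx this) (Fin.ne_of_lt hij)
  constructor
  · intro a b hab
    by_contra hne'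
    rcases lt_or_gt_of_ne hne' with h | h
    · exact hne a b h hab
    · exact hne b a h hab.symm
  · intro i
    have := (specializes_iff_mem_closure.mpr (hspec i)).map hf
    exact specializes_iff_mem_closure.mp this
end

section
/- Let A be a commutative ring over a field k with a maximal ideal m satisfying A/m ≅ k and m = Nil(A) (the nilradical). Let M be an n×n matrix over A[[t]] of the form M = t^d u(t) · Id_n + N, where u(t) ∈ A[[t]] is a unit and every entry of N lies in m[[t]]. Then there exist an n×n matrix M' over A[[t]], an integer e ≥ 0, and an invertible matrix U(t) ∈ GL_n(A[[t]]) such that M' · M = t^e · U(t). -/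
/-- Let `A` be a commutative algebra over a field `k` with a maximal ideal
`m` such that `A/m ≅ k` and `m = Nil(A)`.  Let `M` be an `n × n` matrix over `A⟦t⟧` of the
form `M = t^d u(t) · Id + N`, where `u(t)` is a unit of `A⟦t⟧` and all entries of `N` have
all their coefficients in `m`.  Then there are a matrix `M'` over `A⟦t⟧`, an `e ≥ 0` and an
invertible matrix `U(t)` with `M' · M = t^e · U(t)`. -/
theorem matrix_mul_eq_pow_smul_unit
    {k A : Type*} [Field k] [CommRing A] [Algebra k A]
    (m : Ideal A) (hmax : m.IsMaximal) (hnil : m = nilradical A)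
    (hres : Function.Bijective ((Ideal.Quotient.mk m).comp (algebraMap k A)))
    (n d : ℕ) (u : (PowerSeries A)ˣ)
    (N : Matrix (Fin n) (Fin n) (PowerSeries A))
    (hN : ∀ i j : Fin n, ∀ l : ℕ, PowerSeries.coeff l (N i j) ∈ m)
    (M : Matrix (Fin n) (Fin n) (PowerSeries A))
    (hM : M = ((PowerSeries.X : PowerSeries A) ^ d * (u : PowerSeries A)) •
        (1 : Matrix (Fin n) (Fin n) (PowerSeries A)) + N) :
    ∃ (M' : Matrix (Fin n) (Fin n) (PowerSeries A)) (e : ℕ)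
      (U : (Matrix (Fin n) (Fin n) (PowerSeries A))ˣ),
      M' * M = ((PowerSeries.X : PowerSeries A) ^ e) •
        (U : Matrix (Fin n) (Fin n) (PowerSeries A)) := by
  classical
  set f : PowerSeries A := M.det with hf
  set φ : PowerSeries A →+* PowerSeries (A ⧸ m) := PowerSeries.map (Ideal.Quotient.mk m) with hφ
  have hφN : ∀ i j, φ (N i j) = 0 := by
    intro i j
    ext l
    simp only [hφ, PowerSeries.coeff_map, map_zero]
    exact (Ideal.Quotient.eq_zero_iff_mem).mpr (hN i j l)
  have hmapM : M.map φ = (φ ((PowerSeries.X : PowerSeries A) ^ d * (u : PowerSeries A))) •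
      (1 : Matrix (Fin n) (Fin n) (PowerSeries (A ⧸ m))) := by
    ext i j
    simp [hM, Matrix.map_apply, Matrix.add_apply, Matrix.smul_apply, Matrix.one_apply,
      hφN, apply_ite φ, smul_eq_mul]
  have hdet : φ f = (φ ((PowerSeries.X : PowerSeries A) ^ d * (u : PowerSeries A))) ^ n := by
    rw [hf, RingHom.map_det, show (φ.mapMatrix M) = M.map φ from rfl, hmapM,
      Matrix.det_smul, Matrix.det_one, mul_one, Fintype.card_fin]
  set s : PowerSeries A := f - ((PowerSeries.X : PowerSeries A) ^ d * (u : PowerSeries A)) ^ n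
    with hs_def
  have hφs : φ s = 0 := by rw [hs_def, map_sub, hdet, map_pow, sub_self]
  have hs : ∀ l : ℕ, PowerSeries.coeff (R := A) l s ∈ m := by
    intro l
    have := congrArg (PowerSeries.coeff (R := A ⧸ m) l) hφs
    simpa only [hφ, PowerSeries.coeff_map, map_zero, Ideal.Quotient.eq_zero_iff_mem] using this
  set sl : PowerSeries A := ∑ l ∈ Finset.range (d * n),
      PowerSeries.monomial (R := A) l (PowerSeries.coeff (R := A) l s) with hsl_def
  have hcoeff_sl : ∀ l : ℕ, PowerSeries.coeff (R := A) l sl =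
      if l < d * n then PowerSeries.coeff (R := A) l s else 0 := by
    intro l
    rw [hsl_def, map_sum]
    simp only [PowerSeries.coeff_monomial]
    rw [Finset.sum_ite_eq (Finset.range (d * n)) l]
    simp [Finset.mem_range]
  have hdvd : (PowerSeries.X : PowerSeries A) ^ (d * n) ∣ (s - sl) := by
    rw [PowerSeries.X_pow_dvd_iff]
    intro l hl
    rw [map_sub, hcoeff_sl, if_pos hl, sub_self]
  obtain ⟨h, hh⟩ := hdvd
  set v : PowerSeries A := (u : PowerSeries A) ^ n + h with hv_def
  have hch : PowerSeries.constantCoeff (R := A) h ∈ m := by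
    have h0 : PowerSeries.coeff (R := A) (0 + d * n) ((PowerSeries.X : PowerSeries A) ^ (d * n) * h)
        = PowerSeries.coeff (R := A) 0 h := PowerSeries.coeff_X_pow_mul h (d * n) 0
    have h1 : PowerSeries.coeff (R := A) 0 h = PowerSeries.coeff (R := A) (0 + d * n) (s - sl) := by
      rw [← hh] at h0; exact h0.symm
    have h2 : PowerSeries.coeff (R := A) 0 h ∈ m := by
      rw [h1, map_sub, hcoeff_sl]
      rw [if_neg (by omega)]
      simpa using hs (0 + d * n)
    rw [← PowerSeries.coeff_zero_eq_constantCoeff_apply]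
    exact h2
  have hvu : IsUnit v := by
    rw [PowerSeries.isUnit_iff_constantCoeff, hv_def, map_add, map_pow]
    have h1 : IsUnit ((PowerSeries.constantCoeff (R := A)) (u : PowerSeries A) ^ n) :=
      (IsUnit.map (PowerSeries.constantCoeff (R := A)).toMonoidHom u.isUnit).pow n
    have h2 : IsNilpotent (PowerSeries.constantCoeff (R := A) h) := by
      rw [hnil] at hch; exact hch
    exact h2.isUnit_add_left_of_commute h1 (Commute.all _ _)
  have hpow : ((PowerSeries.X : PowerSeries A) ^ d * (u : PowerSeries A)) ^ n
      = (PowerSeries.X : PowerSeries A) ^ (d * n) * (u : PowerSeries A) ^ n := by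
    rw [mul_pow, ← pow_mul]
  have hfeq : f = (PowerSeries.X : PowerSeries A) ^ (d * n) * v + sl := by
    rw [hv_def, mul_add]
    linear_combination -hs_def + hh + hpow
  have hslnil : IsNilpotent sl := by
    rw [hsl_def]
    apply isNilpotent_sum
    intro l _
    have hnl : IsNilpotent (PowerSeries.coeff (R := A) l s) := by rw [hnil] at hs; exact hs l
    obtain ⟨r, hr⟩ := hnl
    have hm : PowerSeries.monomial (R := A) l (PowerSeries.coeff (R := A) l s)
        = PowerSeries.C (R := A) (PowerSeries.coeff (R := A) l s) * (PowerSeries.X : PowerSeries A) ^ l := by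
      ext j
      rw [PowerSeries.coeff_monomial, PowerSeries.coeff_C_mul_X_pow]
    refine ⟨r, ?_⟩
    rw [hm, mul_pow, ← map_pow, hr, map_zero, zero_mul]
  obtain ⟨R, hR⟩ := hslnil
  have hdvd2 : f ∣ ((PowerSeries.X : PowerSeries A) ^ (d * n) * v) ^ R := by
    set g : PowerSeries A := (PowerSeries.X : PowerSeries A) ^ (d * n) * v with hg_def
    have hg : g - (-sl) = f := by rw [hfeq]; ring
    have hd := sub_dvd_pow_sub_pow g (-sl) R
    rw [hg] at hd
    have : (-sl) ^ R = 0 := by rw [neg_pow, hR, mul_zero]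
    rw [this, sub_zero] at hd
    exact hd
  obtain ⟨C, hC⟩ := hdvd2
  obtain ⟨v', hv'⟩ := hvu
  refine ⟨C • M.adjugate, d * n * R, ?_, ?_⟩
  · exact
      { val := ((v : PowerSeries A) ^ R) • (1 : Matrix (Fin n) (Fin n) (PowerSeries A))
        inv := (((v'⁻¹ : (PowerSeries A)ˣ) : PowerSeries A) ^ R) •
          (1 : Matrix (Fin n) (Fin n) (PowerSeries A))
        val_inv := by
          rw [smul_mul_assoc, one_mul, smul_smul, ← hv', ← mul_pow,
            ← Units.val_mul, mul_inv_cancel]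
          simp
        inv_val := by
          rw [smul_mul_assoc, one_mul, smul_smul, ← hv', ← mul_pow,
            ← Units.val_mul, inv_mul_cancel]
          simp }
  · show (C • M.adjugate) * M = _
    rw [smul_mul_assoc, Matrix.adjugate_mul, smul_smul, ← hf, mul_comm C f, ← hC,
      mul_pow, ← pow_mul, mul_smul]
end

section
/- Let A be a local ring with maximal ideal m such that A/m = k is a field and m = Nil(A), and let f ∈ A[[t]] be a power series whose image in k[[t]] is nonzero. Then f is invertible in the Laurent series ring A((t)). -/
/-- Let `A` be a local ring with maximal ideal `m` such that
`m = Nil(A)`, and let `f ∈ A⟦t⟧` be a power series whose image in `(A/m)⟦t⟧` is nonzero.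
Then `f` is invertible in the Laurent series ring `A((t))`, i.e. in the localization of
`A⟦t⟧` at `t`. -/
theorem isUnit_laurent_of_residue_ne_zero
    {A : Type*} [CommRing A] (m : Ideal A) (hmax : m.IsMaximal) (hnil : m = nilradical A)
    (f : PowerSeries A)
    (hf : PowerSeries.map (Ideal.Quotient.mk m) f ≠ 0) :
    IsUnit (algebraMap (PowerSeries A)
      (Localization.Away (PowerSeries.X : PowerSeries A)) f) := by
  have hex : ∃ n, (PowerSeries.coeff (R := A) n f) ∉ m := by
    by_contra h
    push_neg at h
    apply hf
    ext n
    simp [Ideal.Quotient.eq_zero_iff_mem.mpr (h n)]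
  classical
  set n := Nat.find hex with hn
  have hnm : PowerSeries.coeff (R := A) n f ∉ m := Nat.find_spec hex
  have hlt : ∀ i < n, PowerSeries.coeff (R := A) i f ∈ m := fun i hi => by
    by_contra h; exact Nat.find_min hex hi h
  -- the leading coefficient is a unit
  have hunit : IsUnit (PowerSeries.coeff (R := A) n f) := by
    by_contra h
    obtain ⟨M, hM, hmem⟩ := exists_max_ideal_of_mem_nonunits h
    have := hM.isPrime
    have : m ≤ M := hnil ▸ nilradical_le_prime M
    exact hnm ((hmax.eq_of_le hM.ne_top this) ▸ hmem)
  -- decompose f = X^n * g + trunc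
  have hdvd : (PowerSeries.X : PowerSeries A) ^ n ∣ (f - (PowerSeries.trunc n f : Polynomial A)) := by
    rw [PowerSeries.X_pow_dvd_iff]
    intro i hi
    simp [PowerSeries.coeff_trunc, hi]
  obtain ⟨g, hg⟩ := hdvd
  have hcoeff0 : PowerSeries.constantCoeff (R := A) g = PowerSeries.coeff (R := A) n f := by
    have := congrArg (PowerSeries.coeff (R := A) n) hg
    rw [map_sub] at this
    rw [show (PowerSeries.X : PowerSeries A) ^ n * g = g * PowerSeries.X ^ n by ring] at this
    rw [PowerSeries.coeff_mul_X_pow', if_pos le_rfl, Nat.sub_self] at this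
    have h2 : PowerSeries.coeff (R := A) n ((PowerSeries.trunc n f : Polynomial A) : PowerSeries A) = 0 := by
      simp [PowerSeries.coeff_trunc]
    rw [h2, sub_zero] at this
    rw [this, ← PowerSeries.coeff_zero_eq_constantCoeff_apply]
  have hgu : IsUnit g := PowerSeries.isUnit_iff_constantCoeff.mpr (hcoeff0 ▸ hunit)
  have hnilp : IsNilpotent (((PowerSeries.trunc n f : Polynomial A) : PowerSeries A)) := by
    have : IsNilpotent (PowerSeries.trunc n f) := by
      rw [Polynomial.isNilpotent_iff]
      intro i
      rw [PowerSeries.coeff_trunc]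
      split
      · rw [hnil] at hlt
        exact hlt i (by omega)
      · exact IsNilpotent.zero
    exact this.map (Polynomial.coeToPowerSeries.ringHom)
  have hfeq : f = PowerSeries.X ^ n * g + ((PowerSeries.trunc n f : Polynomial A) : PowerSeries A) := by
    rw [← hg]; ring
  rw [hfeq, map_add, map_mul, map_pow]
  have h1 : IsUnit ((algebraMap (PowerSeries A) (Localization.Away
      (PowerSeries.X : PowerSeries A))) PowerSeries.X ^ n *
      (algebraMap (PowerSeries A) (Localization.Away (PowerSeries.X : PowerSeries A))) g) :=
    ((IsLocalization.Away.algebraMap_isUnit (S := Localization.Away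
      (PowerSeries.X : PowerSeries A)) (PowerSeries.X : PowerSeries A)).pow n).mul (hgu.map _)
  have h2 := hnilp.map (algebraMap (PowerSeries A) (Localization.Away
      (PowerSeries.X : PowerSeries A)))
  rw [add_comm]
  exact h2.isUnit_add_right_of_commute h1 (Commute.all _ _)
end
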